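/- Let H₁ be the space of triples Φ = (ν, ζ, η) with ν, ζ, η ∈ H¹(0, L) and ν(0) = ζ(0) = η(0) = ν(L) = ζ(L) = η(L) = 0, equipped with the norm ‖Φ‖²_d = ‖k(ν' + ζ + lη)‖² + ‖σ(η' − lν)‖² + ‖λ ζ'‖², where k, σ, λ > 0 and l ≥ 0. Then there exists l₀ > 0 and constants c, C > 0, independent of l ∈ [0, l₀], such that c‖Φ‖²_{H¹} ≤ ‖Φ‖²_d ≤ C‖Φ‖²_{H¹} for all Φ ∈ H₁. -/

import Mathlib

open MeasureTheory Set

private lemma cs_aux {x : ℝ} (hx : 0 ≤ x) {g : ℝ → ℝ}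
    (hg : ContinuousOn g (Icc 0 x)) :
    (∫ t in (0:ℝ)..x, g t) ^ 2 ≤ x * ∫ t in (0:ℝ)..x, (g t) ^ 2 := by
  rcases eq_or_lt_of_le hx with h | h
  · simp [← h]
  · have hgi : IntervalIntegrable g volume 0 x :=
      hg.intervalIntegrable_of_Icc hx
    have hgi2 : IntervalIntegrable (fun t => (g t)^2) volume 0 x :=
      (hg.pow 2).intervalIntegrable_of_Icc hx
    set I := ∫ t in (0:ℝ)..x, g t with hIdef
    set J := ∫ t in (0:ℝ)..x, (g t)^2 with hJdef
    set c := I / x with hc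
    have key : 0 ≤ ∫ t in (0:ℝ)..x, (g t - c)^2 :=
      intervalIntegral.integral_nonneg hx (fun u _ => sq_nonneg _)
    have expand : (∫ t in (0:ℝ)..x, (g t - c)^2) = J - 2*c*I + c^2 * x := by
      have hpt : ∀ t : ℝ, (g t - c)^2 = ((g t)^2 - (2*c) * g t) + c^2 := by
        intro t; ring
      simp_rw [hpt]
      rw [intervalIntegral.integral_add (hgi2.sub (hgi.const_mul _))
            intervalIntegrable_const,
          intervalIntegral.integral_sub hgi2 (hgi.const_mul _),
          intervalIntegral.integral_const_mul, intervalIntegral.integral_const]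
      simp [smul_eq_mul]
      ring
    rw [expand] at key
    have key2 : 0 ≤ x * (J - 2*c*I + c^2*x) := mul_nonneg h.le key
    have hx0 : x ≠ 0 := ne_of_gt h
    have key3 : x * (J - 2*c*I + c^2*x) = x*J - I^2 := by
      rw [hc]; field_simp; ring
    rw [key3] at key2
    linarith

private lemma poincare_aux (L : ℝ) (hL : 0 < L) (f f' : ℝ → ℝ)
    (hf : ∀ x ∈ Icc (0:ℝ) L, HasDerivAt f (f' x) x)
    (hf' : ContinuousOn f' (Icc 0 L)) (h0 : f 0 = 0) :
    (∫ x in (0:ℝ)..L, (f x)^2) ≤ L^2 * ∫ x in (0:ℝ)..L, (f' x)^2 := by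
  set J := ∫ x in (0:ℝ)..L, (f' x)^2 with hJ
  have hJnn : 0 ≤ J := intervalIntegral.integral_nonneg hL.le (fun u _ => sq_nonneg _)
  have hfc : ContinuousOn f (Icc 0 L) :=
    fun x hx => ((hf x hx).continuousAt).continuousWithinAt
  have ptwise : ∀ x ∈ Icc (0:ℝ) L, (f x)^2 ≤ L * J := by
    intro x hx
    obtain ⟨hx0, hxL⟩ := hx
    have hsub : Icc (0:ℝ) x ⊆ Icc 0 L := Icc_subset_Icc le_rfl hxL
    have hc1 : ContinuousOn f' (Icc 0 x) := hf'.mono hsub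
    have hc2 : ContinuousOn f' (Icc x L) := hf'.mono (Icc_subset_Icc hx0 le_rfl)
    have hftc : f x = ∫ t in (0:ℝ)..x, f' t := by
      have hIx : uIcc (0:ℝ) x = Icc 0 x := uIcc_of_le hx0
      have := intervalIntegral.integral_eq_sub_of_hasDerivAt
        (f := f) (f' := f') (a := 0) (b := x)
        (fun t ht => hf t (hsub (hIx ▸ ht)))
        (hc1.intervalIntegrable_of_Icc hx0)
      rw [this, h0, sub_zero]
    have hcs : (f x)^2 ≤ x * ∫ t in (0:ℝ)..x, (f' t)^2 := by
      rw [hftc]; exact cs_aux hx0 hc1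
    have hsplit : (∫ t in (0:ℝ)..x, (f' t)^2) + (∫ t in x..L, (f' t)^2) = J :=
      intervalIntegral.integral_add_adjacent_intervals
        ((hc1.pow 2).intervalIntegrable_of_Icc hx0)
        ((hc2.pow 2).intervalIntegrable_of_Icc hxL)
    have htail : 0 ≤ ∫ t in x..L, (f' t)^2 :=
      intervalIntegral.integral_nonneg hxL (fun u _ => sq_nonneg _)
    have hle : (∫ t in (0:ℝ)..x, (f' t)^2) ≤ J := by linarith
    calc (f x)^2 ≤ x * ∫ t in (0:ℝ)..x, (f' t)^2 := hcs
      _ ≤ x * J := mul_le_mul_of_nonneg_left hle hx0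
      _ ≤ L * J := mul_le_mul_of_nonneg_right hxL hJnn
  calc (∫ x in (0:ℝ)..L, (f x)^2)
      ≤ ∫ _x in (0:ℝ)..L, (L * J) :=
        intervalIntegral.integral_mono_on hL.le
          (((hfc.pow 2)).intervalIntegrable_of_Icc hL.le)
          intervalIntegrable_const ptwise
    _ = L^2 * J := by rw [intervalIntegral.integral_const]; simp [smul_eq_mul]; ring


private lemma pt1 (p q r l : ℝ) : p^2 ≤ 3*(p + q + l*r)^2 + 3*q^2 + 3*l^2*r^2 := by
  nlinarith [sq_nonneg (p + 2*q + l*r), sq_nonneg (p + q + 2*l*r), sq_nonneg (q - l*r)]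

private lemma pt2 (s t l : ℝ) : s^2 ≤ 2*(s - l*t)^2 + 2*l^2*t^2 := by
  nlinarith [sq_nonneg (s - 2*l*t)]

private lemma pt3 (k l a1 a2 a3 a4 a5 a6 : ℝ) (h : 0 ≤ 1 - l^2) :
    (k * (a2 + a3 + l * a5)) ^ 2 ≤ 3*k^2 * (a1^2 + a2^2 + a3^2 + a4^2 + a5^2 + a6^2) := by
  nlinarith [mul_nonneg (sq_nonneg k) (sq_nonneg (a2 - a3)),
    mul_nonneg (sq_nonneg k) (sq_nonneg (a2 - l*a5)),
    mul_nonneg (sq_nonneg k) (sq_nonneg (a3 - l*a5)),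
    mul_nonneg (sq_nonneg k) (mul_nonneg h (sq_nonneg a5)),
    mul_nonneg (sq_nonneg k) (sq_nonneg a1), mul_nonneg (sq_nonneg k) (sq_nonneg a4),
    mul_nonneg (sq_nonneg k) (sq_nonneg a6)]

private lemma pt4 (σ l a1 a2 a3 a4 a5 a6 : ℝ) (h : 0 ≤ 1 - l^2) :
    (σ * (a6 - l * a1)) ^ 2 ≤ 2*σ^2 * (a1^2 + a2^2 + a3^2 + a4^2 + a5^2 + a6^2) := by
  nlinarith [mul_nonneg (sq_nonneg σ) (sq_nonneg (a6 + l*a1)),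
    mul_nonneg (sq_nonneg σ) (mul_nonneg h (sq_nonneg a1)),
    mul_nonneg (sq_nonneg σ) (sq_nonneg a2), mul_nonneg (sq_nonneg σ) (sq_nonneg a3),
    mul_nonneg (sq_nonneg σ) (sq_nonneg a4), mul_nonneg (sq_nonneg σ) (sq_nonneg a5)]

private lemma pt5 (lam a1 a2 a3 a4 a5 a6 : ℝ) :
    (lam * a4) ^ 2 ≤ lam^2 * (a1^2 + a2^2 + a3^2 + a4^2 + a5^2 + a6^2) := by
  nlinarith [mul_nonneg (sq_nonneg lam) (sq_nonneg a1), mul_nonneg (sq_nonneg lam) (sq_nonneg a2),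
    mul_nonneg (sq_nonneg lam) (sq_nonneg a3), mul_nonneg (sq_nonneg lam) (sq_nonneg a5),
    mul_nonneg (sq_nonneg lam) (sq_nonneg a6)]

set_option maxHeartbeats 1000000 in
/-- Equivalence of the Bresse energy norm
`‖Φ‖²_d = ‖k(ν' + ζ + lη)‖² + ‖σ(η' − lν)‖² + ‖λζ'‖²` with the standard `H¹` norm on
`(0, L)` for triples vanishing at both endpoints, with constants uniform in the
curvature `l ∈ [0, l₀]` for `l₀` small. -/
theorem stmt11 (L k σ lam : ℝ) (hL : 0 < L) (hk : 0 < k) (hσ : 0 < σ) (hlam : 0 < lam) :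
    ∃ l₀ > 0, ∃ c > 0, ∃ C > 0, ∀ l : ℝ, 0 ≤ l → l ≤ l₀ →
      ∀ ν ζ η ν' ζ' η' : ℝ → ℝ,
        (∀ x ∈ Icc (0:ℝ) L, HasDerivAt ν (ν' x) x) → ContinuousOn ν' (Icc 0 L) →
        (∀ x ∈ Icc (0:ℝ) L, HasDerivAt ζ (ζ' x) x) → ContinuousOn ζ' (Icc 0 L) →
        (∀ x ∈ Icc (0:ℝ) L, HasDerivAt η (η' x) x) → ContinuousOn η' (Icc 0 L) →
        ν 0 = 0 → ζ 0 = 0 → η 0 = 0 → ν L = 0 → ζ L = 0 → η L = 0 →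
        c * (∫ x in (0:ℝ)..L, ((ν x) ^ 2 + (ν' x) ^ 2 + (ζ x) ^ 2 + (ζ' x) ^ 2
              + (η x) ^ 2 + (η' x) ^ 2))
          ≤ (∫ x in (0:ℝ)..L, ((k * (ν' x + ζ x + l * η x)) ^ 2
              + (σ * (η' x - l * ν x)) ^ 2 + (lam * ζ' x) ^ 2)) ∧
        (∫ x in (0:ℝ)..L, ((k * (ν' x + ζ x + l * η x)) ^ 2
              + (σ * (η' x - l * ν x)) ^ 2 + (lam * ζ' x) ^ 2))
          ≤ C * (∫ x in (0:ℝ)..L, ((ν x) ^ 2 + (ν' x) ^ 2 + (ζ x) ^ 2 + (ζ' x) ^ 2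
              + (η x) ^ 2 + (η' x) ^ 2)) := by
  set m : ℝ := min (k^2) (min (σ^2) (lam^2)) with hmdef
  have hm : 0 < m := lt_min (pow_pos hk 2) (lt_min (pow_pos hσ 2) (pow_pos hlam 2))
  have hden : (0:ℝ) < 8*(1+L^2)^2 := by positivity
  refine ⟨min 1 (1/(2*L)), lt_min one_pos (by positivity),
    m / (8*(1+L^2)^2), div_pos hm hden,
    3*k^2 + 2*σ^2 + lam^2, by positivity, ?_⟩
  intro l hl0 hll ν ζ η ν' ζ' η' hν hν'c hζ hζ'c hη hη'c h0ν h0ζ h0η hLν hLζ hLη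
  -- basic continuity
  have hνc : ContinuousOn ν (Icc 0 L) := fun x hx => ((hν x hx).continuousAt).continuousWithinAt
  have hζc : ContinuousOn ζ (Icc 0 L) := fun x hx => ((hζ x hx).continuousAt).continuousWithinAt
  have hηc : ContinuousOn η (Icc 0 L) := fun x hx => ((hη x hx).continuousAt).continuousWithinAt
  have hAc : ContinuousOn (fun x => ν' x + ζ x + l * η x) (Icc 0 L) :=
    (hν'c.add hζc).add (continuousOn_const.mul hηc)
  have hBc : ContinuousOn (fun x => η' x - l * ν x) (Icc 0 L) :=
    hη'c.sub (continuousOn_const.mul hνc)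
  -- integrability of squares
  have ii : ∀ g : ℝ → ℝ, ContinuousOn g (Icc 0 L) →
      IntervalIntegrable (fun x => (g x)^2) volume 0 L :=
    fun g hg => (hg.pow 2).intervalIntegrable_of_Icc hL.le
  have iν2 := ii ν hνc
  have iν'2 := ii ν' hν'c
  have iζ2 := ii ζ hζc
  have iζ'2 := ii ζ' hζ'c
  have iη2 := ii η hηc
  have iη'2 := ii η' hη'c
  have iA2 := ii _ hAc
  have iB2 := ii _ hBc
  -- the individual integrals
  set Pν := ∫ x in (0:ℝ)..L, (ν x)^2 with hPνd
  set Pν' := ∫ x in (0:ℝ)..L, (ν' x)^2 with hPν'd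
  set Pζ := ∫ x in (0:ℝ)..L, (ζ x)^2 with hPζd
  set Pζ' := ∫ x in (0:ℝ)..L, (ζ' x)^2 with hPζ'd
  set Pη := ∫ x in (0:ℝ)..L, (η x)^2 with hPηd
  set Pη' := ∫ x in (0:ℝ)..L, (η' x)^2 with hPη'd
  set a := ∫ x in (0:ℝ)..L, (ν' x + ζ x + l * η x)^2 with had
  set b := ∫ x in (0:ℝ)..L, (η' x - l * ν x)^2 with hbd
  have nn : ∀ g : ℝ → ℝ, 0 ≤ ∫ x in (0:ℝ)..L, (g x)^2 :=
    fun g => intervalIntegral.integral_nonneg hL.le (fun u _ => sq_nonneg _)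
  have hPνnn : 0 ≤ Pν := nn ν
  have hPν'nn : 0 ≤ Pν' := nn ν'
  have hPζnn : 0 ≤ Pζ := nn ζ
  have hPζ'nn : 0 ≤ Pζ' := nn ζ'
  have hPηnn : 0 ≤ Pη := nn η
  have hPη'nn : 0 ≤ Pη' := nn η'
  have hann : 0 ≤ a := nn _
  have hbnn : 0 ≤ b := nn _
  -- Poincaré inequalities
  have hPν : Pν ≤ L^2 * Pν' := poincare_aux L hL ν ν' hν hν'c h0ν
  have hPζ : Pζ ≤ L^2 * Pζ' := poincare_aux L hL ζ ζ' hζ hζ'c h0ζ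
  have hPη : Pη ≤ L^2 * Pη' := poincare_aux L hL η η' hη hη'c h0η
  -- bounds on l
  have hl1 : l ≤ 1 := le_trans hll (min_le_left _ _)
  have hl2 : l ≤ 1/(2*L) := le_trans hll (min_le_right _ _)
  have hlL : l * L ≤ 1/2 := by
    calc l * L ≤ (1/(2*L)) * L := mul_le_mul_of_nonneg_right hl2 hL.le
      _ = 1/2 := by field_simp
  have huL : l^2 * L^2 ≤ 1/4 := by
    calc l^2 * L^2 = (l*L)^2 := by ring
      _ ≤ (1/2)^2 := by
          apply pow_le_pow_left₀ (mul_nonneg hl0 hL.le) hlL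
      _ = 1/4 := by norm_num
  have hu1 : l^2 ≤ 1 := by
    calc l^2 ≤ 1^2 := pow_le_pow_left₀ hl0 hl1 2
      _ = 1 := one_pow 2
  have h1l' : (0:ℝ) ≤ 1 - l^2 := by linarith
  -- splitting of the two main integrals
  have hS : (∫ x in (0:ℝ)..L, ((ν x) ^ 2 + (ν' x) ^ 2 + (ζ x) ^ 2 + (ζ' x) ^ 2
        + (η x) ^ 2 + (η' x) ^ 2)) = Pν + Pν' + Pζ + Pζ' + Pη + Pη' := by
    rw [intervalIntegral.integral_add ((((iν2.add iν'2).add iζ2).add iζ'2).add iη2) iη'2,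
        intervalIntegral.integral_add (((iν2.add iν'2).add iζ2).add iζ'2) iη2,
        intervalIntegral.integral_add ((iν2.add iν'2).add iζ2) iζ'2,
        intervalIntegral.integral_add (iν2.add iν'2) iζ2,
        intervalIntegral.integral_add iν2 iν'2]
  have hE : (∫ x in (0:ℝ)..L, ((k * (ν' x + ζ x + l * η x)) ^ 2
        + (σ * (η' x - l * ν x)) ^ 2 + (lam * ζ' x) ^ 2))
      = k^2 * a + σ^2 * b + lam^2 * Pζ' := by
    simp_rw [mul_pow]
    rw [intervalIntegral.integral_add ((iA2.const_mul _).add (iB2.const_mul _))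
          (iζ'2.const_mul _),
        intervalIntegral.integral_add (iA2.const_mul _) (iB2.const_mul _),
        intervalIntegral.integral_const_mul, intervalIntegral.integral_const_mul,
        intervalIntegral.integral_const_mul]
  -- key lower-bound inequalities
  have h1 : Pν' ≤ 3*a + 3*Pζ + 3*l^2*Pη := by
    have hmono := intervalIntegral.integral_mono_on (μ := volume) hL.le iν'2
      (((iA2.const_mul 3).add (iζ2.const_mul 3)).add (iη2.const_mul (3*l^2)))
      (f := fun x => (ν' x)^2)
      (g := fun x => 3*(ν' x + ζ x + l * η x)^2 + 3*(ζ x)^2 + 3*l^2*(η x)^2)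
      (fun x _ => pt1 (ν' x) (ζ x) (η x) l)
    rwa [intervalIntegral.integral_add ((iA2.const_mul 3).add (iζ2.const_mul 3))
          (iη2.const_mul (3*l^2)),
        intervalIntegral.integral_add (iA2.const_mul 3) (iζ2.const_mul 3),
        intervalIntegral.integral_const_mul, intervalIntegral.integral_const_mul,
        intervalIntegral.integral_const_mul] at hmono
  have h2 : Pη' ≤ 2*b + 2*l^2*Pν := by
    have hmono := intervalIntegral.integral_mono_on (μ := volume) hL.le iη'2
      ((iB2.const_mul 2).add (iν2.const_mul (2*l^2)))
      (f := fun x => (η' x)^2)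
      (g := fun x => 2*(η' x - l * ν x)^2 + 2*l^2*(ν x)^2)
      (fun x _ => pt2 (η' x) (ν x) l)
    rwa [intervalIntegral.integral_add (iB2.const_mul 2) (iν2.const_mul (2*l^2)),
        intervalIntegral.integral_const_mul, intervalIntegral.integral_const_mul] at hmono
  -- resolve the coupled system (uniformly for small l)
  have t1 : l^2 * Pη ≤ l^2 * (L^2 * Pη') := mul_le_mul_of_nonneg_left hPη (sq_nonneg l)
  have t2 : (l^2 * L^2) * Pη' ≤ (1/4) * Pη' := mul_le_mul_of_nonneg_right huL hPη'nn
  have t3 : l^2 * Pν ≤ l^2 * (L^2 * Pν') := mul_le_mul_of_nonneg_left hPν (sq_nonneg l)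
  have t4 : (l^2 * L^2) * Pν' ≤ (1/4) * Pν' := mul_le_mul_of_nonneg_right huL hPν'nn
  have hν'b : Pν' ≤ 3*a + 3*(L^2*Pζ') + (3/4)*Pη' := by linarith [h1, hPζ, t1, t2]
  have hη'b : Pη' ≤ 2*b + (1/2)*Pν' := by linarith [h2, t3, t4]
  have hν'f : Pν' ≤ 5*a + 5*(L^2*Pζ') + 3*b := by
    have hLz : 0 ≤ L^2*Pζ' := mul_nonneg (sq_nonneg L) hPζ'nn
    linarith [hν'b, hη'b]
  have hη'f : Pη' ≤ 3*a + 3*(L^2*Pζ') + 4*b := by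
    have hLz : 0 ≤ L^2*Pζ' := mul_nonneg (sq_nonneg L) hPζ'nn
    linarith [hν'f, hη'b]
  -- total H¹ norm bounded by 8(1+L²)²(a+b+Pζ')
  have hT : Pν' + Pη' + Pζ' ≤ 8*a + 7*b + 8*(L^2*Pζ') + Pζ' := by linarith
  have hT2 : L^2*(Pν' + Pη' + Pζ') ≤ L^2*(8*a + 7*b + 8*(L^2*Pζ') + Pζ') :=
    mul_le_mul_of_nonneg_left hT (sq_nonneg L)
  have hSb : Pν + Pν' + Pζ + Pζ' + Pη + Pη' ≤ 8*(1+L^2)^2*(a + b + Pζ') := by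
    linarith [hT, hT2, hPν, hPζ, hPη, mul_nonneg (sq_nonneg L) hann,
      mul_nonneg (sq_nonneg L) hbnn, mul_nonneg (sq_nonneg L) hPζ'nn,
      mul_nonneg (mul_nonneg (sq_nonneg L) (sq_nonneg L)) hann,
      mul_nonneg (mul_nonneg (sq_nonneg L) (sq_nonneg L)) hbnn,
      mul_nonneg (mul_nonneg (sq_nonneg L) (sq_nonneg L)) hPζ'nn]
  -- energy bounded below by m(a+b+Pζ')
  have hm1 : m ≤ k^2 := min_le_left _ _
  have hm2 : m ≤ σ^2 := le_trans (min_le_right _ _) (min_le_left _ _)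
  have hm3 : m ≤ lam^2 := le_trans (min_le_right _ _) (min_le_right _ _)
  have hElb : m * (a + b + Pζ') ≤ k^2 * a + σ^2 * b + lam^2 * Pζ' := by
    linarith [mul_le_mul_of_nonneg_right hm1 hann, mul_le_mul_of_nonneg_right hm2 hbnn,
      mul_le_mul_of_nonneg_right hm3 hPζ'nn]
  constructor
  · -- lower bound
    rw [hS, hE]
    have hc : (0:ℝ) ≤ m / (8*(1+L^2)^2) := (div_pos hm hden).le
    calc m / (8*(1+L^2)^2) * (Pν + Pν' + Pζ + Pζ' + Pη + Pη')
        ≤ m / (8*(1+L^2)^2) * (8*(1+L^2)^2*(a + b + Pζ')) :=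
          mul_le_mul_of_nonneg_left hSb hc
      _ = m * (a + b + Pζ') := by field_simp
      _ ≤ k^2 * a + σ^2 * b + lam^2 * Pζ' := hElb
  · -- upper bound
    have iS : IntervalIntegrable (fun x => (ν x) ^ 2 + (ν' x) ^ 2 + (ζ x) ^ 2 + (ζ' x) ^ 2
        + (η x) ^ 2 + (η' x) ^ 2) volume 0 L :=
      ((((iν2.add iν'2).add iζ2).add iζ'2).add iη2).add iη'2
    have iE : IntervalIntegrable (fun x => (k * (ν' x + ζ x + l * η x)) ^ 2
        + (σ * (η' x - l * ν x)) ^ 2 + (lam * ζ' x) ^ 2) volume 0 L :=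
      ((ii _ (continuousOn_const.mul hAc)).add (ii _ (continuousOn_const.mul hBc))).add
        (ii _ (continuousOn_const.mul hζ'c))
    have hk2 : (0:ℝ) ≤ k^2 := sq_nonneg k
    have hσ2 : (0:ℝ) ≤ σ^2 := sq_nonneg σ
    have hlam2 : (0:ℝ) ≤ lam^2 := sq_nonneg lam
    have hmono := intervalIntegral.integral_mono_on (μ := volume) hL.le iE
      (iS.const_mul (3*k^2 + 2*σ^2 + lam^2))
      (f := fun x => (k * (ν' x + ζ x + l * η x)) ^ 2
        + (σ * (η' x - l * ν x)) ^ 2 + (lam * ζ' x) ^ 2)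
      (g := fun x => (3*k^2 + 2*σ^2 + lam^2) * ((ν x) ^ 2 + (ν' x) ^ 2 + (ζ x) ^ 2
        + (ζ' x) ^ 2 + (η x) ^ 2 + (η' x) ^ 2))
      (by
        intro x _
        have e1 := pt3 k l (ν x) (ν' x) (ζ x) (ζ' x) (η x) (η' x) h1l'
        have e2 := pt4 σ l (ν x) (ν' x) (ζ x) (ζ' x) (η x) (η' x) h1l'
        have e3 := pt5 lam (ν x) (ν' x) (ζ x) (ζ' x) (η x) (η' x)
        linarith [e1, e2, e3])
    rw [intervalIntegral.integral_const_mul] at hmono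
    exact hmono
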